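/- Let (R, 𝔪) be a reduced local ring of Krull dimension 1 satisfying infinite prime absorbance and E an infinite set of minimal primes of R. Let π : R → S := ∏_{𝔭∈E} R/𝔭 be the canonical map. Then Im π* equals the Zariski closure of E, which is E ∪ {𝔪}, and for every prime ideal P of S containing the direct sum ideal ⊕_{𝔭∈E} R/𝔭 one has π⁻¹(P) = 𝔪. -/

import Mathlib

lemma aux_no_chain {R : Type*} [CommRing R] (hdim : ringKrullDim R = 1)
    {p q m : PrimeSpectrum R} (h1 : p < q) (h2 : q < m) : False := by
  have h := Order.LTSeries.length_le_krullDim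
    (((RelSeries.singleton {(a, b) : PrimeSpectrum R × PrimeSpectrum R | a < b} p).snoc q (by simpa)).snoc m (by simpa))
  rw [show Order.krullDim (PrimeSpectrum R) = ringKrullDim R from rfl, hdim] at h
  simp at h

/-- Let `(R, 𝔪)` be a reduced local ring of Krull dimension `1` satisfying infinite prime
absorbance (a P.Z. ring), and `E` an infinite set of minimal primes of `R`. Let
`π : R → S = ∏_{𝔭∈E} R/𝔭` be the canonical map. Then `Im π*` equals the Zariski closure
of `E`, which is `E ∪ {𝔪}`, and every prime of `S` containing the direct sum ideal
`⊕_{𝔭∈E} R/𝔭` contracts to `𝔪`. -/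
theorem stmt_15 {R : Type*} [CommRing R] [IsLocalRing R] [IsReduced R]
    (hdim : ringKrullDim R = 1)
    (hPZ : ∀ F : Set (Ideal R), (∀ q ∈ F, q.IsPrime) →
      ∀ 𝔭 : Ideal R, 𝔭.IsPrime → sInf F ≤ 𝔭 → ∃ q ∈ F, q ≤ 𝔭)
    (E : Set (PrimeSpectrum R)) (hmin : ∀ p ∈ E, p.asIdeal ∈ minimalPrimes R)
    (hInf : E.Infinite) :
    Set.range
        (PrimeSpectrum.comap
          (Pi.ringHom fun p : E => Ideal.Quotient.mk (p : PrimeSpectrum R).asIdeal)) =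
        closure E ∧
      closure E =
        insert ⟨IsLocalRing.maximalIdeal R,
          (IsLocalRing.maximalIdeal.isMaximal R).isPrime⟩ E ∧
      ∀ P : Ideal (∀ p : E, R ⧸ (p : PrimeSpectrum R).asIdeal), P.IsPrime →
        (∀ f : ∀ p : E, R ⧸ (p : PrimeSpectrum R).asIdeal,
          {p | f p ≠ 0}.Finite → f ∈ P) →
        P.comap (Pi.ringHom fun p : E => Ideal.Quotient.mk (p : PrimeSpectrum R).asIdeal) =
          IsLocalRing.maximalIdeal R := by
  haveI : Infinite E := hInf.to_subtype
  set π := Pi.ringHom fun p : E => Ideal.Quotient.mk (p : PrimeSpectrum R).asIdeal with hπ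
  -- kernel of π
  have hker : RingHom.ker π = PrimeSpectrum.vanishingIdeal E := by
    rw [hπ]
    show RingHom.ker (RingHom.pi _) = _
    rw [Pi.ker_ringHom]
    simp only [Ideal.mk_ker, PrimeSpectrum.vanishingIdeal]
    exact iInf_subtype'' E fun x => x.asIdeal
  have hsInf : sInf (PrimeSpectrum.asIdeal '' E) = PrimeSpectrum.vanishingIdeal E := by
    rw [sInf_image]; rfl
  have hprimes : ∀ q ∈ PrimeSpectrum.asIdeal '' E, q.IsPrime := by
    rintro _ ⟨p, hp, rfl⟩; exact p.isPrime
  -- every prime containing vanishingIdeal E is in E or is the maximal ideal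
  have key : ∀ x : PrimeSpectrum R, PrimeSpectrum.vanishingIdeal E ≤ x.asIdeal →
      x ∈ E ∨ x.asIdeal = IsLocalRing.maximalIdeal R := by
    intro x hx
    obtain ⟨_, ⟨p₀, hp₀E, rfl⟩, hle⟩ :=
      hPZ _ hprimes x.asIdeal x.isPrime (hsInf ▸ hx)
    rcases eq_or_lt_of_le hle with heq | hlt
    · exact Or.inl (by rwa [show x = p₀ from (PrimeSpectrum.ext heq).symm])
    · right
      rcases eq_or_lt_of_le (IsLocalRing.le_maximalIdeal x.isPrime.ne_top) with h | h
      · exact h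
      · exact (aux_no_chain hdim
          ((PrimeSpectrum.asIdeal_lt_asIdeal p₀ x).mp hlt)
          ((PrimeSpectrum.asIdeal_lt_asIdeal x
            ⟨IsLocalRing.maximalIdeal R,
             (IsLocalRing.maximalIdeal.isMaximal R).isPrime⟩).mp h)).elim
  -- claim 3
  have claim3 : ∀ P : Ideal (∀ p : E, R ⧸ (p : PrimeSpectrum R).asIdeal), P.IsPrime →
      (∀ f : ∀ p : E, R ⧸ (p : PrimeSpectrum R).asIdeal,
        {p | f p ≠ 0}.Finite → f ∈ P) →
      P.comap π = IsLocalRing.maximalIdeal R := by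
    intro P hP hDS
    haveI := hP
    set q := P.comap π with hq
    haveI hqP : q.IsPrime := Ideal.IsPrime.comap π
    have hkq : PrimeSpectrum.vanishingIdeal E ≤ q := by
      rw [← hker]; intro y hy
      simp only [hq, Ideal.mem_comap]
      rw [RingHom.mem_ker] at hy
      rw [hy]; exact P.zero_mem
    obtain ⟨_, ⟨p₀, hp₀E, rfl⟩, hle⟩ := hPZ _ hprimes q hqP (hsInf ▸ hkq)
    -- find x in all other primes but not in p₀
    have hne : ¬ sInf (PrimeSpectrum.asIdeal '' (E \ {p₀})) ≤ p₀.asIdeal := by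
      intro hcon
      obtain ⟨_, ⟨p₁, hp₁, rfl⟩, hle'⟩ := hPZ _
        (by rintro _ ⟨p, hp, rfl⟩; exact p.isPrime) p₀.asIdeal p₀.isPrime hcon
      have hge : p₀.asIdeal ≤ p₁.asIdeal :=
        (hmin p₀ hp₀E).2 ⟨p₁.isPrime, bot_le⟩ hle'
      exact hp₁.2 (PrimeSpectrum.ext (le_antisymm hle' hge))
    obtain ⟨x, hx1, hx2⟩ := SetLike.not_le_iff_exists.mp hne
    have hsupp : {p : E | π x p ≠ 0}.Finite := by
      apply Set.Finite.subset (Set.finite_singleton (⟨p₀, hp₀E⟩ : E))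
      intro p hp
      simp only [Set.mem_setOf_eq] at hp
      by_contra hpe
      apply hp
      have hpE : (p : PrimeSpectrum R) ∈ E \ {p₀} := by
        refine ⟨p.2, ?_⟩
        simp only [Set.mem_singleton_iff]
        intro hc; exact hpe (Subtype.ext hc)
      have : x ∈ (p : PrimeSpectrum R).asIdeal :=
        Ideal.mem_sInf.mp hx1 ⟨(p : PrimeSpectrum R), hpE, rfl⟩
      exact (Ideal.Quotient.eq_zero_iff_mem).mpr this
    have hxq : x ∈ q := hDS (π x) hsupp
    have hlt : p₀.asIdeal < q := lt_of_le_of_ne hle (fun h => hx2 (h ▸ hxq))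
    rcases key ⟨q, hqP⟩ hkq with hmem | heq
    · exfalso
      have hm := hmin _ hmem
      have hqp : q ≤ p₀.asIdeal := hm.2 ⟨p₀.isPrime, bot_le⟩ hle
      exact hx2 (hqp hxq)
    · exact heq
  refine ⟨?_, ?_, claim3⟩
  · -- range comap = closure E
    ext x
    rw [← PrimeSpectrum.zeroLocus_vanishingIdeal_eq_closure]
    constructor
    · rintro ⟨P, rfl⟩
      rw [PrimeSpectrum.mem_zeroLocus]
      intro y hy
      have : π y = 0 := by rwa [← RingHom.mem_ker, hker]
      show y ∈ (PrimeSpectrum.comap π P).asIdeal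
      rw [PrimeSpectrum.comap_asIdeal, Ideal.mem_comap, this]
      exact P.asIdeal.zero_mem
    · intro hx
      rw [PrimeSpectrum.mem_zeroLocus, SetLike.coe_subset_coe] at hx
      rcases key x hx with hxE | hxm
      · -- projection prime
        haveI := x.isPrime
        haveI : IsDomain (R ⧸ x.asIdeal) := Ideal.Quotient.isDomain x.asIdeal
        haveI : (⊥ : Ideal (R ⧸ x.asIdeal)).IsPrime := Ideal.bot_prime
        refine ⟨⟨Ideal.comap (Pi.evalRingHom _ (⟨x, hxE⟩ : E)) ⊥,
          Ideal.IsPrime.comap _⟩, ?_⟩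
        apply PrimeSpectrum.ext
        rw [PrimeSpectrum.comap_asIdeal]
        ext a
        simp only [Ideal.mem_comap, Ideal.mem_bot]
        show Ideal.Quotient.mk x.asIdeal a = 0 ↔ a ∈ x.asIdeal
        exact Ideal.Quotient.eq_zero_iff_mem
      · -- maximal ideal; use prime over the direct sum ideal
        set S := ∀ p : E, R ⧸ (p : PrimeSpectrum R).asIdeal
        let D : Ideal S :=
          { carrier := {f : S | {p | f p ≠ 0}.Finite}
            zero_mem' := by
              exact Set.finite_empty.subset (fun p hp => (hp rfl).elim)
            add_mem' := by
              intro a b ha hb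
              refine Set.Finite.subset (ha.union hb) ?_
              intro p hp
              by_contra hc
              simp only [Set.mem_union, Set.mem_setOf_eq, not_or, not_not] at hc
              exact hp (show a p + b p = 0 by rw [hc.1, hc.2, add_zero])
            smul_mem' := by
              intro c f hf
              refine Set.Finite.subset hf ?_
              intro p hp
              by_contra hc
              simp only [Set.mem_setOf_eq, not_not] at hc
              exact hp (show c p * f p = 0 by rw [hc, mul_zero]) }
        have hD : D ≠ ⊤ := by
          rw [Ne, Ideal.eq_top_iff_one]
          intro h1
          have : {p : E | (1 : S) p ≠ 0} = Set.univ := by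
            ext p
            haveI := (p : PrimeSpectrum R).isPrime
            haveI : Nontrivial (R ⧸ (p : PrimeSpectrum R).asIdeal) :=
              Ideal.Quotient.nontrivial_iff.mpr (p : PrimeSpectrum R).isPrime.ne_top
            simp only [Set.mem_setOf_eq, Set.mem_univ, iff_true]
            exact one_ne_zero
          have hfin : ({p : E | (1 : S) p ≠ 0}).Finite := h1
          rw [this] at hfin
          exact Set.infinite_univ hfin
        obtain ⟨M, hM, hDM⟩ := Ideal.exists_le_maximal D hD
        refine ⟨⟨M, hM.isPrime⟩, ?_⟩
        apply PrimeSpectrum.ext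
        rw [PrimeSpectrum.comap_asIdeal, hxm]
        exact claim3 M hM.isPrime (fun f hf => hDM hf)
  · -- closure E = insert 𝔪 E
    rw [← PrimeSpectrum.zeroLocus_vanishingIdeal_eq_closure]
    ext x
    rw [PrimeSpectrum.mem_zeroLocus, SetLike.coe_subset_coe]
    constructor
    · intro hx
      rcases key x hx with hxE | hxm
      · exact Set.mem_insert_iff.mpr (Or.inr hxE)
      · exact Set.mem_insert_iff.mpr (Or.inl (PrimeSpectrum.ext hxm))
    · intro hx
      rcases Set.mem_insert_iff.mp hx with rfl | hxE
      · obtain ⟨p, hpE⟩ := hInf.nonempty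
        have h1 : PrimeSpectrum.vanishingIdeal E ≤ p.asIdeal :=
          fun y hy => (PrimeSpectrum.mem_vanishingIdeal E y).mp hy p hpE
        exact IsLocalRing.le_maximalIdeal
          (fun h => p.isPrime.ne_top (top_le_iff.mp (h ▸ h1)))
      · exact fun y hy => (PrimeSpectrum.mem_vanishingIdeal E y).mp hy x hxE
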